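/- With the notation of the context, the additive automorphism m_{ω_{t²}} of K (multiplication by ω_{t²}) is not an element of the subgroup E. -/

import Mathlib

private lemma aux_t_dvd {q t : ℕ} (hq : 2 ≤ q) (ht : 0 < t) :
    ∀ j, q ^ t - 1 ∣ q ^ j - 1 → t ∣ j := by
  intro j
  induction j using Nat.strong_induction_on with
  | _ j ih =>
    intro hdvd
    rcases Nat.lt_or_ge j t with hjt | hjt
    · rcases Nat.eq_zero_or_pos j with rfl | hj
      · exact dvd_zero t
      · exfalso
        have h1 : q ^ j < q ^ t := Nat.pow_lt_pow_right hq hjt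
        have h2 : 2 ≤ q ^ j := by
          calc 2 = 2 ^ 1 := by norm_num
          _ ≤ q ^ j := Nat.pow_le_pow_left hq j |>.trans' (Nat.pow_le_pow_right (by norm_num) hj)
        have := Nat.le_of_dvd (by omega) hdvd
        omega
    · have h1 : q ^ (j - t) * q ^ t = q ^ j := by rw [← pow_add]; congr 1; omega
      have h2 : 1 ≤ q ^ (j - t) := Nat.one_le_pow _ _ (by omega)
      have h3 : 1 ≤ q ^ t := Nat.one_le_pow _ _ (by omega)
      have h4 : q ^ (j - t) ≤ q ^ j := Nat.pow_le_pow_right (by omega) (by omega)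
      have h5 : q ^ (j - t) * (q ^ t - 1) = q ^ j - q ^ (j - t) := by
        rw [Nat.mul_sub, mul_one, h1]
      have hkey : q ^ (j - t) - 1 = (q ^ j - 1) - q ^ (j - t) * (q ^ t - 1) := by omega
      have hdvd' : q ^ t - 1 ∣ q ^ (j - t) - 1 := by
        rw [hkey]; exact Nat.dvd_sub hdvd (dvd_mul_left _ _)
      obtain ⟨c, hc⟩ := ih (j - t) (by omega) hdvd'
      exact ⟨c + 1, by rw [Nat.mul_add, mul_one, ← hc]; omega⟩

theorem stmt4 (p t n s : ℕ) (hp : p.Prime) (ht : 1 < t) (htp : Nat.Coprime t p)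
    (hn : 0 < n) (hnmod : p ^ n ≡ 1 [MOD t ^ 2])
    (hnmin : ∀ m : ℕ, 0 < m → p ^ m ≡ 1 [MOD t ^ 2] → n ≤ m)
    (hs : s = (p ^ (n * t) - 1) / (t * (p ^ n - 1)))
    (K : Type) [Field K] [Fintype K] (hK : Fintype.card K = p ^ (n * t))
    (ωs ωt2 : K) (hωs : IsPrimitiveRoot ωs s) (hωt2 : IsPrimitiveRoot ωt2 (t ^ 2))
    (mωs mωt2 Φ : AddAut K)
    (hmωs : ∀ x : K, mωs x = ωs * x) (hmωt2 : ∀ x : K, mωt2 x = ωt2 * x)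
    (hΦ : ∀ x : K, Φ x = x ^ (p ^ n)) :
    mωt2 ∉ AddSubgroup.closure {mωs, Φ + mωt2} := by
  intro hmem
  have ht0 : 0 < t := by omega
  have h2pn : 2 ≤ p ^ n := Nat.one_lt_pow hn.ne' hp.one_lt
  have hqmodt : p ^ n ≡ 1 [MOD t] := hnmod.of_dvd (dvd_pow_self t two_ne_zero)
  -- geometric sum
  set S : ℕ := ∑ i ∈ Finset.range t, (p ^ n) ^ i with hSdef
  have hgeom : S * (p ^ n - 1) = p ^ (n * t) - 1 := by
    have h1 : 1 ≤ p ^ n := by omega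
    have h1t : 1 ≤ p ^ (n * t) := Nat.one_le_pow _ _ hp.pos
    rw [hSdef]
    zify [h1, h1t]
    push_cast
    rw [pow_mul]
    exact geom_sum_mul ((p : ℤ) ^ n) t
  have hSmod : S ≡ t [MOD t ^ 2] := by
    have hq1 : ((p : ZMod (t ^ 2)) ^ n) = 1 := by
      have := (ZMod.natCast_eq_natCast_iff (p ^ n) 1 (t ^ 2)).mpr hnmod
      push_cast at this
      simpa using this
    have : ((S : ℕ) : ZMod (t ^ 2)) = ((t : ℕ) : ZMod (t ^ 2)) := by
      rw [hSdef]
      push_cast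
      simp [hq1]
    exact (ZMod.natCast_eq_natCast_iff _ _ _).mp this
  have hSge : t ≤ S := by
    have : ∑ i ∈ Finset.range t, 1 ≤ S := by
      apply Finset.sum_le_sum
      intro i _
      exact Nat.one_le_pow _ _ (by omega)
    simpa using this
  obtain ⟨k, hk⟩ : ∃ k, S = t + t ^ 2 * k := by
    obtain ⟨k, hk⟩ := (Nat.modEq_iff_dvd' hSge).mp hSmod.symm
    exact ⟨k, by omega⟩
  have hsval : s = 1 + t * k := by
    rw [hs]
    have heq : p ^ (n * t) - 1 = t * (p ^ n - 1) * (1 + t * k) := by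
      rw [← hgeom, hk]; ring
    rw [heq, Nat.mul_div_cancel_left _ (Nat.mul_pos ht0 (by omega))]
  have hcop : Nat.Coprime s (t ^ 2) := by
    have : Nat.Coprime s t := by
      rw [hsval]
      exact (Nat.coprime_add_mul_left_left 1 t k).mpr (Nat.coprime_one_left t)
    exact this.pow_right 2
  -- the invariant
  set P : AddAut K → Prop := fun φ => ∃ j e : ℕ, ∃ l : K,
    (∀ x : K, φ x = l * x ^ (p ^ n) ^ j) ∧ l ^ s = ωt2 ^ (s * e) ∧ e ≡ j [MOD t] with hPdef
  have hP1 : P 0 := ⟨0, 0, 1, fun x => by simp, by simp, rfl⟩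
  have hPmul : ∀ f g : AddAut K, P f → P g → P (f + g) := by
    rintro f g ⟨j1, e1, l1, hf, hl1, he1⟩ ⟨j2, e2, l2, hg, hl2, he2⟩
    refine ⟨j1 + j2, e1 + e2 * (p ^ n) ^ j1, l1 * l2 ^ (p ^ n) ^ j1, fun x => ?_, ?_, ?_⟩
    · rw [AddAut.add_apply, hg x, hf]
      ring
    · have h1 : (l2 ^ (p ^ n) ^ j1) ^ s = (l2 ^ s) ^ (p ^ n) ^ j1 := by
        rw [← pow_mul, mul_comm, pow_mul]
      rw [mul_pow, hl1, h1, hl2, ← pow_mul, ← pow_add]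
      congr 1
      ring
    · have hQ : (p ^ n) ^ j1 ≡ 1 [MOD t] := by
        simpa using hqmodt.pow j1
      have := he1.add ((he2.mul hQ))
      simpa using this
  have hPpow : ∀ (f : AddAut K) (m : ℕ), P f → P (m • f) := by
    intro f m hf
    induction m with
    | zero => simpa using hP1
    | succ m ih => rw [succ_nsmul]; exact hPmul _ _ ih hf
  have hPinv : ∀ f : AddAut K, P f → P (-f) := by
    intro f hf
    have : Finite (AddAut K) := Finite.of_injective (fun f => (f : K → K))
      (fun a b h => by ext x; exact congrFun h x)
    have hord : 0 < addOrderOf f := addOrderOf_pos f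
    have h1 : (addOrderOf f - 1) • f + f = 0 := by
      rw [← succ_nsmul, Nat.sub_add_cancel hord]
      exact addOrderOf_nsmul_eq_zero f
    have h2 : (addOrderOf f - 1) • f = -f := eq_neg_of_add_eq_zero_left h1
    rw [← h2]
    exact hPpow f _ hf
  have hPgen1 : P mωs := ⟨0, 0, ωs, fun x => by simp [hmωs x], by simp [hωs.pow_eq_one], rfl⟩
  have hPgen2 : P (Φ + mωt2) := by
    refine ⟨1, p ^ n, ωt2 ^ p ^ n, fun x => ?_, ?_, ?_⟩
    · rw [AddAut.add_apply, hmωt2 x, hΦ _, mul_pow, pow_one]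
    · rw [← pow_mul, mul_comm]
    · exact hqmodt
  have hPm : P mωt2 := by
    refine AddSubgroup.closure_induction (p := fun g _ => P g) ?_ hP1
      (fun x y _ _ hx hy => hPmul x y hx hy) (fun x _ hx => hPinv x hx) hmem
    intro x hx
    rcases hx with rfl | rfl
    · exact hPgen1
    · exact hPgen2
  obtain ⟨j, e, l, hfx, hls, hej⟩ := hPm
  have hωne : ωt2 ≠ 0 := hωt2.ne_zero (by positivity)
  have hl : l = ωt2 := by
    have h1 := hfx 1
    rw [hmωt2] at h1
    simpa using h1.symm
  have hx : ∀ x : K, x ^ (p ^ n) ^ j = x := by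
    intro x
    have h1 := hfx x
    rw [hmωt2, hl] at h1
    exact (mul_left_cancel₀ hωne h1).symm
  -- t ∣ j
  obtain ⟨ζ, hζ⟩ := IsCyclic.exists_generator (α := Kˣ)
  have hordζ : orderOf ζ = p ^ (n * t) - 1 := by
    rw [orderOf_eq_card_of_forall_mem_zpowers hζ, Nat.card_units, Nat.card_eq_fintype_card, hK]
  have hζeq : ζ ^ (p ^ n) ^ j = ζ ^ 1 := by
    apply Units.ext
    push_cast
    simpa using hx (ζ : K)
  have hmodK : (p ^ n) ^ j ≡ 1 [MOD p ^ (n * t) - 1] := by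
    rw [← hordζ]
    exact pow_eq_pow_iff_modEq.mp hζeq
  have hdvdK : p ^ (n * t) - 1 ∣ (p ^ n) ^ j - 1 :=
    (Nat.modEq_iff_dvd' (Nat.one_le_pow _ _ (by omega))).mp hmodK.symm
  have htj : t ∣ j := by
    refine aux_t_dvd h2pn ht0 j ?_
    rw [← pow_mul]
    exact hdvdK
  -- e ≡ 1 mod t²
  have hee : s * e ≡ s * 1 [MOD t ^ 2] := by
    have hpow : ωt2 ^ (s * e) = ωt2 ^ (s * 1) := by
      rw [← hls, hl, mul_one]
    have hueq : (Units.mk0 ωt2 hωne) ^ (s * e) = (Units.mk0 ωt2 hωne) ^ (s * 1) := by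
      apply Units.ext
      rw [Units.val_pow_eq_pow_val, Units.val_pow_eq_pow_val]
      exact hpow
    have hou : orderOf (Units.mk0 ωt2 hωne) = t ^ 2 := by
      rw [← orderOf_units]
      exact hωt2.eq_orderOf.symm
    have h2 := pow_eq_pow_iff_modEq.mp hueq
    rwa [hou] at h2
  have he1 : e ≡ 1 [MOD t ^ 2] :=
    Nat.ModEq.cancel_left_of_coprime (Nat.coprime_comm.mp hcop) hee
  have he1t : e ≡ 1 [MOD t] := he1.of_dvd (dvd_pow_self t two_ne_zero)
  have hj0 : j ≡ 0 [MOD t] := (Nat.modEq_zero_iff_dvd).mpr htj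
  have hfin : (1 : ℕ) ≡ 0 [MOD t] := he1t.symm.trans (hej.trans hj0)
  have := (Nat.modEq_zero_iff_dvd).mp hfin
  have := Nat.le_of_dvd one_pos this
  omega
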